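/- Let σ₂ = σ₂' + iσ₂'' with σ₂' > 0, and let t₁, t₂, t₃ ∈ ℝ satisfy t₂ = −|σ₂|²t₁ and t₃ = rσ₂'t₁ for some r ∈ ℝ with 1/t₁ = rσ₂'' ± √((r²+1)|σ₂|²) (t₁ ≠ 0). Then det(D_{t₃}(σ₂) + T) = 0 and det(D_{t₃}(σ₂) − T) = 0, where D_{t₃}(σ₂) = [[1/σ₂', σ₂''/σ₂'+t₃],[σ₂''/σ₂'+t₃, |σ₂|²/σ₂']] and T = diag(t₁, t₂). -/

import Mathlib

/-- With `t₂ = −|σ₂|²t₁`, `t₃ = rσ₂'t₁`, and `1/t₁ = rσ₂'' ± √((r²+1)|σ₂|²)`, both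
`det(D_{t₃}(σ₂) + T) = 0` and `det(D_{t₃}(σ₂) − T) = 0`. -/
theorem stmt_8 (σ₂ : ℂ) (hσ : 0 < σ₂.re) (r t₁ t₂ t₃ : ℝ) (ht₁ : t₁ ≠ 0)
    (ht₂ : t₂ = -(‖σ₂‖ ^ 2) * t₁) (ht₃ : t₃ = r * σ₂.re * t₁)
    (hroot : 1 / t₁ = r * σ₂.im + Real.sqrt ((r ^ 2 + 1) * ‖σ₂‖ ^ 2) ∨
             1 / t₁ = r * σ₂.im - Real.sqrt ((r ^ 2 + 1) * ‖σ₂‖ ^ 2)) :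
    let D : Matrix (Fin 2) (Fin 2) ℝ :=
      !![1 / σ₂.re, σ₂.im / σ₂.re + t₃; σ₂.im / σ₂.re + t₃, ‖σ₂‖ ^ 2 / σ₂.re]
    let T : Matrix (Fin 2) (Fin 2) ℝ := !![t₁, 0; 0, t₂]
    (D + T).det = 0 ∧ (D - T).det = 0 := by
  intro D T
  have ha : σ₂.re ≠ 0 := ne_of_gt hσ
  have hs : ‖σ₂‖ ^ 2 = σ₂.re ^ 2 + σ₂.im ^ 2 := by
    rw [Complex.sq_norm, Complex.normSq_apply]; ring
  have hnn : 0 ≤ (r ^ 2 + 1) * ‖σ₂‖ ^ 2 := by positivity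
  have hsq := Real.sq_sqrt hnn
  have hu : Real.sqrt (r ^ 2 + 1) ^ 2 = r ^ 2 + 1 :=
    Real.sq_sqrt (by positivity)
  have key : 1 - 2 * r * σ₂.im * t₁ - (r ^ 2 * σ₂.re ^ 2 + ‖σ₂‖ ^ 2) * t₁ ^ 2 = 0 := by
    rcases hroot with h | h <;> rw [Real.sqrt_mul (by positivity), Real.sqrt_sq (norm_nonneg _)] at h <;> field_simp at h
    · linear_combination (1 - r * σ₂.im * t₁ + Real.sqrt (r ^ 2 + 1) * ‖σ₂‖ * t₁) * h
        + ‖σ₂‖ ^ 2 * t₁ ^ 2 * hu + r ^ 2 * t₁ ^ 2 * hs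
    · linear_combination (1 - r * σ₂.im * t₁ - Real.sqrt (r ^ 2 + 1) * ‖σ₂‖ * t₁) * h
        + ‖σ₂‖ ^ 2 * t₁ ^ 2 * hu + r ^ 2 * t₁ ^ 2 * hs
  have hD : D = !![1 / σ₂.re, σ₂.im / σ₂.re + t₃; σ₂.im / σ₂.re + t₃, ‖σ₂‖ ^ 2 / σ₂.re] := rfl
  have hT : T = !![t₁, 0; 0, t₂] := rfl
  constructor <;>
  · rw [hD, hT]
    simp only [Matrix.det_fin_two, Matrix.of_apply, Matrix.add_apply, Matrix.sub_apply, Matrix.cons_val', Matrix.cons_val_zero,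
      Matrix.cons_val_one, Matrix.head_cons, Matrix.empty_val', Matrix.cons_val_fin_one, Matrix.head_fin_const]
    rw [ht₂, ht₃]
    field_simp
    nlinarith [key, hs, sq_nonneg σ₂.re]
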